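/- Let dμ and dν be bounded ℝ^k-valued measures on a measurable space X, dμ_ε := dμ + ε dν, with dν = A_ε |dμ_ε| + dν_s^ε, dν_s^ε ⊥ |dμ_ε|. Then: (1) for arbitrary ε₁, ε₂ ∈ ℝ, the measures |dμ_{ε₁}| + |dν_s^{ε₁}| and |dμ_{ε₂}| + |dν_s^{ε₂}| are mutually absolutely continuous; (2) if ε₁ and ε₂ are both regular, then |dμ_{ε₁}| and |dμ_{ε₂}| are mutually absolutely continuous. -/

import Mathlib

open MeasureTheory Filter Set Topology
open scoped ENNReal NNReal InnerProductSpace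

private lemma null_of_setIntegral_zero {X : Type*} [MeasurableSpace X] {k : ℕ}
    (ρ : Measure X) [IsFiniteMeasure ρ] (f : X → EuclideanSpace ℝ (Fin k))
    (hf1 : ∀ᵐ x ∂ρ, ‖f x‖ = 1) (hfi : Integrable f ρ)
    {S : Set X} (hS : MeasurableSet S)
    (h : ∀ T : Set X, MeasurableSet T → T ⊆ S → ∫ x in T, f x ∂ρ = 0) :
    ρ S = 0 := by
  have hzero : f =ᵐ[ρ.restrict S] 0 := by
    apply Integrable.ae_eq_zero_of_forall_setIntegral_eq_zero (hfi.restrict)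
    intro T hT _
    rw [Measure.restrict_restrict hT]
    exact h (T ∩ S) (hT.inter hS) inter_subset_right
  have hf1' : ∀ᵐ x ∂ρ.restrict S, ‖f x‖ = 1 := ae_restrict_of_ae hf1
  have hFalse : ∀ᵐ (_ : X) ∂ρ.restrict S, False := by
    filter_upwards [hzero, hf1'] with x h0 h1
    simp [h0] at h1
  have : ρ.restrict S Set.univ = 0 := by
    simpa using hFalse
  rwa [Measure.restrict_apply_univ] at this

theorem mutual_absolute_continuity
    (X : Type*) [MeasurableSpace X] (k : ℕ)
    (μtv : ℝ → Measure X) (N A : ℝ → X → EuclideanSpace ℝ (Fin k))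
    (νtv : Measure X) (Nν : X → EuclideanSpace ℝ (Fin k))
    (νstv : ℝ → Measure X) (Ns : ℝ → X → EuclideanSpace ℝ (Fin k))
    (hμfin : ∀ ε, IsFiniteMeasure (μtv ε))
    (hνfin : IsFiniteMeasure νtv)
    (hνsfin : ∀ ε, IsFiniteMeasure (νstv ε))
    (hN1 : ∀ ε, ∀ᵐ x ∂(μtv ε), ‖N ε x‖ = 1)
    (hNν1 : ∀ᵐ x ∂νtv, ‖Nν x‖ = 1)
    (hNs1 : ∀ ε, ∀ᵐ x ∂(νstv ε), ‖Ns ε x‖ = 1)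
    (hNint : ∀ ε, Integrable (N ε) (μtv ε))
    (hAint : ∀ ε, Integrable (A ε) (μtv ε))
    (hNνint : Integrable Nν νtv)
    (hNsint : ∀ ε, Integrable (Ns ε) (νstv ε))
    (hsing : ∀ ε, (νstv ε).MutuallySingular (μtv ε))
    (hadd : ∀ ε : ℝ, ∀ S : Set X, MeasurableSet S →
      ∫ x in S, N ε x ∂(μtv ε) = (∫ x in S, N 0 x ∂(μtv 0)) + ε • ∫ x in S, Nν x ∂νtv)
    (hRN : ∀ ε : ℝ, ∀ S : Set X, MeasurableSet S →
      ∫ x in S, Nν x ∂νtv = (∫ x in S, A ε x ∂(μtv ε)) + ∫ x in S, Ns ε x ∂(νstv ε))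
    : (∀ ε₁ ε₂ : ℝ,
        (μtv ε₁ + νstv ε₁).AbsolutelyContinuous (μtv ε₂ + νstv ε₂) ∧
        (μtv ε₂ + νstv ε₂).AbsolutelyContinuous (μtv ε₁ + νstv ε₁)) ∧
      (∀ ε₁ ε₂ : ℝ, νstv ε₁ = 0 → νstv ε₂ = 0 →
        (μtv ε₁).AbsolutelyContinuous (μtv ε₂) ∧
        (μtv ε₂).AbsolutelyContinuous (μtv ε₁)) := by
  haveI := hμfin; haveI := hνsfin
  -- key step
  have key : ∀ ε₁ ε₂ : ℝ, ∀ S : Set X, MeasurableSet S →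
      μtv ε₂ S = 0 → νstv ε₂ S = 0 → μtv ε₁ S = 0 ∧ νstv ε₁ S = 0 := by
    intro ε₁ ε₂ S hS hμ2 hνs2
    have hintzero : ∀ (ρ : Measure X) (g : X → EuclideanSpace ℝ (Fin k)),
        ρ S = 0 → ∀ T : Set X, T ⊆ S → ∫ x in T, g x ∂ρ = 0 := by
      intro ρ g hρ T hT
      have : ρ.restrict T = 0 := by
        rw [Measure.restrict_eq_zero]
        exact le_antisymm (le_trans (measure_mono hT) hρ.le) zero_le
      rw [this, integral_zero_measure]
    have hNν0 : ∀ T : Set X, MeasurableSet T → T ⊆ S → ∫ x in T, Nν x ∂νtv = 0 := by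
      intro T hTm hT
      rw [hRN ε₂ T hTm, hintzero _ _ hμ2 T hT, hintzero _ _ hνs2 T hT, add_zero]
    have hN10 : ∀ T : Set X, MeasurableSet T → T ⊆ S →
        ∫ x in T, N ε₁ x ∂(μtv ε₁) = 0 := by
      intro T hTm hT
      have h2 := hadd ε₂ T hTm
      rw [hintzero _ _ hμ2 T hT, hNν0 T hTm hT, smul_zero, add_zero] at h2
      rw [hadd ε₁ T hTm, ← h2, hNν0 T hTm hT, smul_zero, add_zero]
    have hμ1 : μtv ε₁ S = 0 :=
      null_of_setIntegral_zero (μtv ε₁) (N ε₁) (hN1 ε₁) (hNint ε₁) hS hN10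
    have hνs10 : ∀ T : Set X, MeasurableSet T → T ⊆ S →
        ∫ x in T, Ns ε₁ x ∂(νstv ε₁) = 0 := by
      intro T hTm hT
      have h1 := hRN ε₁ T hTm
      rw [hintzero _ _ hμ1 T hT, hNν0 T hTm hT, zero_add] at h1
      exact h1.symm
    exact ⟨hμ1, null_of_setIntegral_zero (νstv ε₁) (Ns ε₁) (hNs1 ε₁) (hNsint ε₁) hS hνs10⟩
  constructor
  · intro ε₁ ε₂
    have h : ∀ a b : ℝ, (μtv a + νstv a).AbsolutelyContinuous (μtv b + νstv b) := by
      intro a b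
      apply Measure.AbsolutelyContinuous.mk
      intro S hS h0
      rw [Measure.add_apply, add_eq_zero] at h0 ⊢
      exact key a b S hS h0.1 h0.2
    exact ⟨h ε₁ ε₂, h ε₂ ε₁⟩
  · intro ε₁ ε₂ h1 h2
    have h : ∀ a b : ℝ, νstv a = 0 → νstv b = 0 →
        (μtv a).AbsolutelyContinuous (μtv b) := by
      intro a b ha hb
      apply Measure.AbsolutelyContinuous.mk
      intro S hS h0
      exact (key a b S hS h0 (by simp [hb])).1
    exact ⟨h ε₁ ε₂ h1 h2, h ε₂ ε₁ h2 h1⟩
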